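/- Let (A, B; k) be an MSTD fringe pair. As n → ∞, ρ_n(A, B; k) converges to a limit ρ(A, B; k), and ρ(A, B; k) = σ(A; k) · σ(B; k). -/

import Mathlib

open Finset Filter Pointwise
open scoped Classical

/-- `n - S = {n - s : s ∈ S}`. -/
def mirror (n : ℕ) (S : Finset ℤ) : Finset ℤ := S.image (fun s => (n : ℤ) - s)

/-- Probability that a uniformly random subset of `[0,n]` satisfies `P`. -/
noncomputable def prAll (n : ℕ) (P : Finset ℤ → Prop) : ℝ :=
  (((Finset.Icc (0:ℤ) n).powerset.filter P).card : ℝ) / 2 ^ (n + 1)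

/-- Probability w.r.t. the uniform distribution on subsets of `[0,n]` containing `0` and `n`. -/
noncomputable def pr0n (n : ℕ) (P : Finset ℤ → Prop) : ℝ :=
  (((Finset.Icc (0:ℤ) n).powerset.filter
      (fun S => (0:ℤ) ∈ S ∧ (n:ℤ) ∈ S ∧ P S)).card : ℝ) / 2 ^ (n - 1)

/-- A finite set of integers is MSTD if it has more sums than differences. -/
def IsMSTD (S : Finset ℤ) : Prop := (S - S).card < (S + S).card

/-- Probability that a uniformly random subset of `[0,n]` is MSTD. -/
noncomputable def rhoN (n : ℕ) : ℝ := prAll n IsMSTD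

/-- The pair (number of missing sums, number of missing differences) of `S ⊆ [0,n]`. -/
def lam (n : ℕ) (S : Finset ℤ) : ℕ × ℕ :=
  (2 * n + 1 - (S + S).card, 2 * n + 1 - (S - S).card)

/-- Probability that a uniformly random subset of `[0,n]` satisfies `lam n S ∈ Λ`. -/
noncomputable def rhoL (Λ : Set (ℕ × ℕ)) (n : ℕ) : ℝ := prAll n (fun S => lam n S ∈ Λ)

/-- An MSTD fringe pair of order `k`. -/
def IsFringePair (A B : Finset ℤ) (k : ℕ) : Prop :=
  A ⊆ Finset.Icc (0:ℤ) k ∧ B ⊆ Finset.Icc (0:ℤ) k ∧ (0:ℤ) ∈ A ∧ (0:ℤ) ∈ B ∧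
    2 * ((A + B) ∩ Finset.Icc (0:ℤ) k).card <
      ((A + A) ∩ Finset.Icc (0:ℤ) k).card + ((B + B) ∩ Finset.Icc (0:ℤ) k).card

/-- `S ⊆ [0,n]` is a rich MSTD set with MSTD fringe pair `(A, B; k)`. -/
def IsRichWith (n : ℕ) (S A B : Finset ℤ) (k : ℕ) : Prop :=
  IsFringePair A B k ∧ 2 * k < n ∧ S ∩ Finset.Icc (0:ℤ) k = A ∧
    mirror n S ∩ Finset.Icc (0:ℤ) k = B ∧
    Finset.Icc ((k:ℤ) + 1) (2 * n - k - 1) ⊆ S + S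

/-- The strict partial order on MSTD fringe pairs: `(A', B'; k') < (A, B; k)`. -/
def FringeLt (A' B' : Finset ℤ) (k' : ℕ) (A B : Finset ℤ) (k : ℕ) : Prop :=
  IsFringePair A' B' k' ∧ IsFringePair A B k ∧ k' < k ∧
    A' = A ∩ Finset.Icc (0:ℤ) k' ∧ B' = B ∩ Finset.Icc (0:ℤ) k' ∧
    Finset.Icc ((k':ℤ) + 1) k ⊆ A + A ∧ Finset.Icc ((k':ℤ) + 1) k ⊆ B + B

/-- A minimal MSTD fringe pair. -/
def MinimalFringePair (A B : Finset ℤ) (k : ℕ) : Prop :=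
  IsFringePair A B k ∧ ¬ ∃ A' B' k', FringeLt A' B' k' A B k

/-- `σ_n(A; k)`: probability that a uniform random `T ⊆ [0,n]` is `k`-semi-rich with
prefix `(A; k)`. -/
noncomputable def sigmaN (A : Finset ℤ) (k n : ℕ) : ℝ :=
  (((Finset.Icc (0:ℤ) n).powerset.filter
      (fun T => T ∩ Finset.Icc (0:ℤ) k = A ∧ Finset.Icc ((k:ℤ) + 1) n ⊆ T + T)).card : ℝ) / 2 ^ n

/-- `ρ_n(A, B; k) = 2^{-n+1} · #{S ⊆ [0,n] : S ∩ [0,k] = A, (n−S) ∩ [0,k] = B,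
[k+1, 2n−k−1] ⊆ S+S}`. -/
noncomputable def rhoABn (A B : Finset ℤ) (k n : ℕ) : ℝ :=
  2 * (((Finset.Icc (0:ℤ) n).powerset.filter
      (fun S => S ∩ Finset.Icc (0:ℤ) k = A ∧ mirror n S ∩ Finset.Icc (0:ℤ) k = B ∧
        Finset.Icc ((k:ℤ) + 1) (2 * n - k - 1) ⊆ S + S)).card : ℝ) / 2 ^ n

/-- `ρ_{*n} = 2^{-n+1} · #{S ⊆ [0,n] : 0, n ∈ S and S is MSTD}`. -/
noncomputable def rhoStarN (n : ℕ) : ℝ :=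
  2 * (((Finset.Icc (0:ℤ) n).powerset.filter
      (fun S => (0:ℤ) ∈ S ∧ (n:ℤ) ∈ S ∧ IsMSTD S)).card : ℝ) / 2 ^ n

/-- `G_j(A; k) = #{T ⊆ [0,j] : T ∩ [0,k] = A, [k+1,j−1] ⊆ T+T, j ∉ T+T}`. -/
noncomputable def G (A : Finset ℤ) (k j : ℕ) : ℕ :=
  ((Finset.Icc (0:ℤ) j).powerset.filter
      (fun T => T ∩ Finset.Icc (0:ℤ) k = A ∧
        Finset.Icc ((k:ℤ) + 1) ((j:ℤ) - 1) ⊆ T + T ∧ (j:ℤ) ∉ T + T)).card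

/-- `S ⊆ [0,n]` is `k`-affluent. -/
def Affluent (n k : ℕ) (S : Finset ℤ) : Prop :=
  Finset.Icc ((k:ℤ) + 1) (2 * n - k - 1) ⊆ S + S ∧
    Finset.Icc (-(n:ℤ) + k + 1) ((n:ℤ) - k - 1) ⊆ S - S

/-- `μ_n(A, B; k)`: probability that a uniform random `S ⊆ [0,n]` is `k`-affluent
with fringe pair `(A, B; k)`. -/
noncomputable def muN (A B : Finset ℤ) (k n : ℕ) : ℝ :=
  prAll n (fun S => S ∩ Finset.Icc (0:ℤ) k = A ∧ mirror n S ∩ Finset.Icc (0:ℤ) k = B ∧ Affluent n k S)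

/-- The strict partial order on general fringe pairs. -/
def GFringeLt (A' B' : Finset ℤ) (k' : ℕ) (A B : Finset ℤ) (k : ℕ) : Prop :=
  A' ⊆ Finset.Icc (0:ℤ) k' ∧ B' ⊆ Finset.Icc (0:ℤ) k' ∧ A ⊆ Finset.Icc (0:ℤ) k ∧ B ⊆ Finset.Icc (0:ℤ) k ∧
    k' < k ∧ A' = A ∩ Finset.Icc (0:ℤ) k' ∧ B' = B ∩ Finset.Icc (0:ℤ) k' ∧
    Finset.Icc ((k':ℤ) + 1) k ⊆ A + A ∧ Finset.Icc ((k':ℤ) + 1) k ⊆ B + B ∧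
    Finset.Icc ((k':ℤ) + 1) k ⊆ A + B

/-- A minimal general fringe pair. -/
def GMinimal (A B : Finset ℤ) (k : ℕ) : Prop :=
  A ⊆ Finset.Icc (0:ℤ) k ∧ B ⊆ Finset.Icc (0:ℤ) k ∧ ¬ ∃ A' B' k', GFringeLt A' B' k' A B k

/-- `λ(A, B; k)` for a general fringe pair. -/
noncomputable def lamPair (A B : Finset ℤ) (k : ℕ) : ℕ × ℕ :=
  (2 * (k + 1) - ((A + A) ∩ Finset.Icc (0:ℤ) k).card - ((B + B) ∩ Finset.Icc (0:ℤ) k).card,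
   2 * (k + 1 - ((A + B) ∩ Finset.Icc (0:ℤ) k).card))


lemma union_inter_left' {T₁ T₂ u v : Finset ℤ} (h1 : T₁ ⊆ u) (h2 : T₂ ⊆ v) (hd : Disjoint u v) :
    (T₁ ∪ T₂) ∩ u = T₁ := by
  ext x
  simp only [Finset.mem_inter, Finset.mem_union]
  constructor
  · rintro ⟨hx1 | hx2, hxu⟩
    · exact hx1
    · exact absurd (h2 hx2) (Finset.disjoint_left.1 hd hxu)
  · intro hx; exact ⟨Or.inl hx, h1 hx⟩

lemma card_split (u v : Finset ℤ) (hd : Disjoint u v) (P Q : Finset ℤ → Prop)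
    [DecidablePred P] [DecidablePred Q] :
    (((u ∪ v).powerset).filter (fun S => P (S ∩ u) ∧ Q (S ∩ v))).card
      = (u.powerset.filter P).card * (v.powerset.filter Q).card := by
  rw [← Finset.card_product]
  apply Finset.card_nbij' (fun S => (S ∩ u, S ∩ v)) (fun p => p.1 ∪ p.2)
  · intro S hS
    simp only [Finset.mem_coe, Finset.mem_filter, Finset.mem_powerset] at hS
    simp only [Finset.mem_coe, Finset.mem_product, Finset.mem_filter, Finset.mem_powerset]
    exact ⟨⟨Finset.inter_subset_right, hS.2.1⟩, ⟨Finset.inter_subset_right, hS.2.2⟩⟩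
  · intro p hp
    simp only [Finset.mem_coe, Finset.mem_product, Finset.mem_filter, Finset.mem_powerset] at hp
    obtain ⟨⟨h1, hP⟩, ⟨h2, hQ⟩⟩ := hp
    simp only [Finset.mem_coe, Finset.mem_filter, Finset.mem_powerset]
    refine ⟨Finset.union_subset_union h1 h2, ?_, ?_⟩
    · rwa [union_inter_left' h1 h2 hd]
    · rwa [Finset.union_comm, union_inter_left' h2 h1 hd.symm]
  · intro S hS
    simp only [Finset.mem_coe, Finset.mem_filter, Finset.mem_powerset] at hS
    have := hS.1
    ext x
    simp only [Finset.mem_union, Finset.mem_inter]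
    constructor
    · rintro (⟨h, _⟩ | ⟨h, _⟩) <;> exact h
    · intro hx
      rcases Finset.mem_union.1 (this hx) with h | h
      · exact Or.inl ⟨hx, h⟩
      · exact Or.inr ⟨hx, h⟩
  · intro p hp
    simp only [Finset.mem_coe, Finset.mem_product, Finset.mem_filter, Finset.mem_powerset] at hp
    obtain ⟨⟨h1, _⟩, ⟨h2, _⟩⟩ := hp
    have e1 := union_inter_left' h1 h2 hd
    have e2 : (p.1 ∪ p.2) ∩ v = p.2 := by
      rw [Finset.union_comm]; exact union_inter_left' h2 h1 hd.symm
    simp [e1, e2]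

lemma card_filter_iff {p q : Finset ℤ → Prop} [DecidablePred p] [DecidablePred q]
    {s : Finset (Finset ℤ)} (h : ∀ x ∈ s, p x ↔ q x) :
    (s.filter p).card = (s.filter q).card := by
  apply Finset.card_nbij' id id
  · intro x hx
    have := Finset.mem_filter.1 hx
    exact Finset.mem_filter.2 ⟨this.1, (h x this.1).1 this.2⟩
  · intro x hx
    have := Finset.mem_filter.1 hx
    exact Finset.mem_filter.2 ⟨this.1, (h x this.1).2 this.2⟩
  · intro x _; rfl
  · intro x _; rfl


lemma card_split_right (u v : Finset ℤ) (hd : Disjoint u v) (Q : Finset ℤ → Prop)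
    [DecidablePred Q] :
    (((u ∪ v).powerset).filter (fun S => Q (S ∩ v))).card
      = 2 ^ u.card * (v.powerset.filter Q).card := by
  have h := card_split u v hd (fun _ => True) Q
  have he : ∀ S ∈ (u ∪ v).powerset, (Q (S ∩ v)) ↔ ((fun _ => True) (S ∩ u) ∧ Q (S ∩ v)) := by
    intro S _
    simp only [true_and]
  rw [card_filter_iff he]
  have ht : ∀ T ∈ u.powerset, (fun _ => True) T := fun _ _ => trivial
  rw [Finset.filter_true_of_mem ht, Finset.card_powerset] at h
  exact h

def okPairs (l : List (ℤ × ℤ)) (S : Finset ℤ) : Prop := ∀ p ∈ l, ¬(p.1 ∈ S ∧ p.2 ∈ S)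

def pdisj (p q : ℤ × ℤ) : Prop := p.1 ≠ q.1 ∧ p.1 ≠ q.2 ∧ p.2 ≠ q.1 ∧ p.2 ≠ q.2

lemma card_pair_filter {a b : ℤ} (hab : a ≠ b) :
    (({a, b} : Finset ℤ).powerset.filter (fun T => ¬(a ∈ T ∧ b ∈ T))).card = 3 := by
  have h1 : (({a, b} : Finset ℤ).powerset.filter (fun T => ¬(a ∈ T ∧ b ∈ T)))
      = ({a, b} : Finset ℤ).powerset \ {({a,b} : Finset ℤ)} := by
    ext T
    simp only [Finset.mem_filter, Finset.mem_sdiff, Finset.mem_powerset, Finset.mem_singleton]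
    constructor
    · rintro ⟨hT, hn⟩
      refine ⟨hT, fun hEq => hn ?_⟩
      subst hEq
      exact ⟨Finset.mem_insert_self _ _, Finset.mem_insert_of_mem (Finset.mem_singleton_self _)⟩
    · rintro ⟨hT, hne⟩
      refine ⟨hT, fun hc => hne ?_⟩
      apply Finset.Subset.antisymm hT
      intro x hx
      rcases Finset.mem_insert.1 hx with rfl | hx
      · exact hc.1
      · rw [Finset.mem_singleton.1 hx]; exact hc.2
  rw [h1, Finset.card_sdiff_of_subset (by simp), Finset.card_powerset,
    Finset.card_insert_of_notMem (by simpa using hab)]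
  simp

lemma card_okPairs (l : List (ℤ × ℤ)) : ∀ (g : Finset ℤ),
    (∀ p ∈ l, p.1 ∈ g ∧ p.2 ∈ g) → (∀ p ∈ l, p.1 ≠ p.2) → l.Pairwise pdisj →
    (g.powerset.filter (okPairs l)).card ≤ 3 ^ l.length * 2 ^ (g.card - 2 * l.length) := by
  induction l with
  | nil =>
    intro g _ _ _
    have hT : ∀ S ∈ g.powerset, okPairs [] S := by
      intro S _ p hp
      simp at hp
    rw [Finset.filter_true_of_mem hT, Finset.card_powerset]
    simp
  | cons hd tl ih =>
    intro g hmem hne hpw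
    obtain ⟨a, b⟩ := hd
    have hab : a ≠ b := hne (a, b) (List.mem_cons_self)
    have hag : a ∈ g := (hmem (a,b) (List.mem_cons_self)).1
    have hbg : b ∈ g := (hmem (a,b) (List.mem_cons_self)).2
    set u : Finset ℤ := {a, b} with hu
    have husub : u ⊆ g := by
      intro x hx
      rcases Finset.mem_insert.1 hx with rfl | hx
      · exact hag
      · rw [Finset.mem_singleton.1 hx]; exact hbg
    set g' : Finset ℤ := g \ u with hg'
    have htl : ∀ p ∈ tl, p.1 ∈ g' ∧ p.2 ∈ g' := by
      intro p hp
      have hd := (List.pairwise_cons.1 hpw).1 p hp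
      have := hmem p (List.mem_cons_of_mem _ hp)
      simp only [hg', Finset.mem_sdiff, hu, Finset.mem_insert, Finset.mem_singleton]
      obtain ⟨d1, d2, d3, d4⟩ := hd
      exact ⟨⟨this.1, by tauto⟩, ⟨this.2, by tauto⟩⟩
    have hdisj : Disjoint u g' := Finset.disjoint_sdiff
    have hgu : g = u ∪ g' := by
      rw [hg', Finset.union_sdiff_self_eq_union]
      exact (Finset.union_eq_right.2 husub).symm
    have key : (g.powerset.filter (okPairs ((a,b) :: tl))).card
        = ((u.powerset.filter (fun T => ¬(a ∈ T ∧ b ∈ T))).card)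
          * ((g'.powerset.filter (okPairs tl)).card) := by
      rw [hgu]
      convert card_split u g' hdisj (fun T => ¬(a ∈ T ∧ b ∈ T)) (okPairs tl) using 1
      apply Finset.card_nbij' id id
      · intro S hS
        simp only [Finset.mem_coe, Finset.mem_filter, Finset.mem_powerset] at hS ⊢
        obtain ⟨hsub, hok⟩ := hS
        refine ⟨hsub, ?_, ?_⟩
        · have := hok (a,b) (List.mem_cons_self)
          simp only [Finset.mem_inter, hu, Finset.mem_insert, Finset.mem_singleton, id]
          tauto
        · intro p hp
          have h0 := hok p (List.mem_cons_of_mem _ hp)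
          simp only [Finset.mem_inter, id]
          intro hc
          exact h0 ⟨hc.1.1, hc.2.1⟩
      · intro S hS
        simp only [Finset.mem_coe, Finset.mem_filter, Finset.mem_powerset, id] at hS ⊢
        obtain ⟨hsub, hP, hQ⟩ := hS
        refine ⟨hsub, ?_⟩
        intro p hp
        rcases List.mem_cons.1 hp with rfl | hp
        · intro hc
          exact hP ⟨Finset.mem_inter.2 ⟨hc.1, by simp [hu]⟩, Finset.mem_inter.2 ⟨hc.2, by simp [hu]⟩⟩
        · have h1 := (htl p hp).1
          have h2 := (htl p hp).2
          intro hc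
          exact hQ p hp ⟨Finset.mem_inter.2 ⟨hc.1, h1⟩, Finset.mem_inter.2 ⟨hc.2, h2⟩⟩
      · intro S _; rfl
      · intro S _; rfl
    rw [key, card_pair_filter hab]
    have hu2 : u.card = 2 := by
      rw [hu, Finset.card_insert_of_notMem (by simpa using hab), Finset.card_singleton]
    have hcard : g'.card = g.card - 2 := by
      rw [hg', Finset.card_sdiff_of_subset husub, hu2]
    have hih := ih g' htl (fun p hp => hne p (List.mem_cons_of_mem _ hp)) (List.pairwise_cons.1 hpw).2
    calc 3 * (g'.powerset.filter (okPairs tl)).card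
        ≤ 3 * (3 ^ tl.length * 2 ^ (g'.card - 2 * tl.length)) := Nat.mul_le_mul_left _ hih
      _ = 3 ^ (tl.length + 1) * 2 ^ (g.card - 2 * (tl.length + 1)) := by
          rw [hcard]
          have h2 : g.card - 2 - 2 * tl.length = g.card - 2 * (tl.length + 1) := by omega
          rw [h2]; ring
      _ = 3 ^ ((a,b) :: tl).length * 2 ^ (g.card - 2 * ((a,b) :: tl).length) := by
          simp [List.length_cons]

lemma card_bad (n m : ℕ) (s : ℤ) (hm : m ≤ n) (hs1 : (m:ℤ) + 1 ≤ s) (hs2 : s ≤ 2*(n:ℤ) - m - 1) :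
    ((Finset.Icc (0:ℤ) n).powerset.filter (fun S => s ∉ S + S)).card
      ≤ 3 ^ (m/2) * 2 ^ (n + 1 - 2*(m/2)) := by
  set q := m / 2 with hq
  set l0 : ℤ := max 0 (s - n) with hl0
  have hq2 : 2 * q ≤ m := by omega
  have hkey : 2 * l0 + 2 * (q:ℤ) ≤ s - 1 := by
    rcases le_or_gt s n with h | h
    · have : l0 = 0 := by rw [hl0]; omega
      rw [this]; push_cast; omega
    · have : l0 = s - n := by rw [hl0]; omega
      rw [this]; push_cast; omega
  set l : List (ℤ × ℤ) := (List.range q).map (fun i : ℕ => ((l0 + (i:ℤ), s - (l0 + (i:ℤ))) : ℤ × ℤ)) with hl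
  have hlen : l.length = q := by simp [hl]
  have hmem : ∀ p ∈ l, p.1 ∈ Finset.Icc (0:ℤ) n ∧ p.2 ∈ Finset.Icc (0:ℤ) n := by
    intro p hp
    rcases List.mem_map.1 hp with ⟨i, hi, rfl⟩
    have hi' : i < q := List.mem_range.1 hi
    have h1 : (0:ℤ) ≤ l0 := le_max_left _ _
    have h2 : s - (n:ℤ) ≤ l0 := le_max_right _ _
    constructor <;> simp only [Finset.mem_Icc] <;> constructor <;> push_cast <;> omega
  have hne : ∀ p ∈ l, p.1 ≠ p.2 := by
    intro p hp
    rcases List.mem_map.1 hp with ⟨i, hi, rfl⟩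
    have hi' : i < q := List.mem_range.1 hi
    simp only
    intro hc
    omega
  have hpw : l.Pairwise pdisj := by
    rw [hl, List.pairwise_map]
    refine (List.pairwise_lt_range : List.Pairwise (· < ·) (List.range q)).imp_of_mem ?_
    intro i j hi hj hij
    have hi' : i < q := List.mem_range.1 hi
    have hj' : j < q := List.mem_range.1 hj
    have h1 : (0:ℤ) ≤ l0 := le_max_left _ _
    refine ⟨?_, ?_, ?_, ?_⟩ <;> simp only [Function.onFun] <;> intro hc <;> omega
  have hsub : ((Finset.Icc (0:ℤ) n).powerset.filter (fun S => s ∉ S + S))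
      ⊆ ((Finset.Icc (0:ℤ) n).powerset.filter (okPairs l)) := by
    intro S hS
    simp only [Finset.mem_filter] at hS ⊢
    refine ⟨hS.1, ?_⟩
    intro p hp
    rcases List.mem_map.1 hp with ⟨i, hi, rfl⟩
    intro hc
    exact hS.2 (Finset.mem_add.2 ⟨l0 + (i:ℤ), hc.1, s - (l0 + (i:ℤ)), hc.2, by ring⟩)
  have hcard : (Finset.Icc (0:ℤ) n).card = n + 1 := by
    rw [Int.card_Icc]; omega
  calc ((Finset.Icc (0:ℤ) n).powerset.filter (fun S => s ∉ S + S)).card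
      ≤ ((Finset.Icc (0:ℤ) n).powerset.filter (okPairs l)).card := Finset.card_le_card hsub
    _ ≤ 3 ^ l.length * 2 ^ ((Finset.Icc (0:ℤ) n).card - 2 * l.length) :=
        card_okPairs l _ hmem hne hpw
    _ = 3 ^ q * 2 ^ (n + 1 - 2 * q) := by rw [hlen, hcard]



lemma mem_mirror {n : ℕ} {S : Finset ℤ} {x : ℤ} : x ∈ mirror n S ↔ (n:ℤ) - x ∈ S := by
  unfold mirror
  constructor
  · rintro h
    rcases Finset.mem_image.1 h with ⟨s, hs, rfl⟩
    simpa using hs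
  · intro h
    exact Finset.mem_image.2 ⟨(n:ℤ) - x, h, by ring⟩

lemma mirror_mirror {n : ℕ} {S : Finset ℤ} : mirror n (mirror n S) = S := by
  ext x; simp [mem_mirror]

lemma mirror_Icc {n : ℕ} {a b : ℤ} : mirror n (Finset.Icc a b) = Finset.Icc ((n:ℤ)-b) ((n:ℤ)-a) := by
  ext x; simp only [mem_mirror, Finset.mem_Icc]; omega

lemma mirror_subset_Icc {n : ℕ} {S : Finset ℤ} (h : S ⊆ Finset.Icc (0:ℤ) n) :
    mirror n S ⊆ Finset.Icc (0:ℤ) n := by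
  intro x hx
  have := h (mem_mirror.1 hx)
  simp only [Finset.mem_Icc] at *
  omega

lemma mirror_inter {n : ℕ} {S T : Finset ℤ} : mirror n (S ∩ T) = mirror n S ∩ mirror n T := by
  ext x; simp [mem_mirror]

lemma mem_mirror_add_mirror {n : ℕ} {S : Finset ℤ} {s : ℤ} :
    s ∈ mirror n S + mirror n S ↔ 2*(n:ℤ) - s ∈ S + S := by
  constructor
  · intro h
    rcases Finset.mem_add.1 h with ⟨a, ha, b, hb, rfl⟩
    exact Finset.mem_add.2 ⟨(n:ℤ)-a, mem_mirror.1 ha, (n:ℤ)-b, mem_mirror.1 hb, by ring⟩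
  · intro h
    rcases Finset.mem_add.1 h with ⟨a, ha, b, hb, hab⟩
    refine Finset.mem_add.2 ⟨(n:ℤ)-a, mem_mirror.2 (by simpa using ha), (n:ℤ)-b,
      mem_mirror.2 (by simpa using hb), by omega⟩

lemma inter_Icc_inter {S : Finset ℤ} {a b : ℤ} (hab : a ≤ b) :
    (S ∩ Finset.Icc (0:ℤ) b) ∩ Finset.Icc (0:ℤ) a = S ∩ Finset.Icc (0:ℤ) a := by
  ext x
  simp only [Finset.mem_inter, Finset.mem_Icc]
  constructor
  · rintro ⟨⟨h1, _⟩, h2⟩; exact ⟨h1, h2⟩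
  · rintro ⟨h1, h2⟩; exact ⟨⟨h1, h2.1, h2.2.trans hab⟩, h2⟩

lemma sums_restrict {S : Finset ℤ} (h0 : ∀ x ∈ S, (0:ℤ) ≤ x) {mm s : ℤ} (hs : s ≤ mm) :
    s ∈ (S ∩ Finset.Icc (0:ℤ) mm) + (S ∩ Finset.Icc (0:ℤ) mm) ↔ s ∈ S + S := by
  constructor
  · intro h
    rcases Finset.mem_add.1 h with ⟨a, ha, b, hb, rfl⟩
    exact Finset.mem_add.2 ⟨a, (Finset.mem_inter.1 ha).1, b, (Finset.mem_inter.1 hb).1, rfl⟩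
  · intro h
    rcases Finset.mem_add.1 h with ⟨a, ha, b, hb, rfl⟩
    have ha0 := h0 a ha
    have hb0 := h0 b hb
    refine Finset.mem_add.2 ⟨a, Finset.mem_inter.2 ⟨ha, Finset.mem_Icc.2 ⟨ha0, by omega⟩⟩,
      b, Finset.mem_inter.2 ⟨hb, Finset.mem_Icc.2 ⟨hb0, by omega⟩⟩, rfl⟩

lemma range_restrict {S : Finset ℤ} (h0 : ∀ x ∈ S, (0:ℤ) ≤ x) {mm a b : ℤ} (hb : b ≤ mm) :
    Finset.Icc a b ⊆ (S ∩ Finset.Icc (0:ℤ) mm) + (S ∩ Finset.Icc (0:ℤ) mm)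
      ↔ Finset.Icc a b ⊆ S + S := by
  constructor <;> intro h s hs
  · exact (sums_restrict h0 ((Finset.mem_Icc.1 hs).2.trans hb)).1 (h hs)
  · exact (sums_restrict h0 ((Finset.mem_Icc.1 hs).2.trans hb)).2 (h hs)

lemma mirror_range_subset {n : ℕ} {S : Finset ℤ} {a b : ℤ} :
    Finset.Icc a b ⊆ mirror n S + mirror n S
      ↔ Finset.Icc (2*(n:ℤ) - b) (2*(n:ℤ) - a) ⊆ S + S := by
  constructor <;> intro h s hs
  · rw [Finset.mem_Icc] at hs
    have h2 : 2*(n:ℤ) - s ∈ Finset.Icc a b := Finset.mem_Icc.2 (by omega)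
    have := mem_mirror_add_mirror.1 (h h2)
    simpa using this
  · rw [Finset.mem_Icc] at hs
    refine mem_mirror_add_mirror.2 (h (Finset.mem_Icc.2 (by omega)))

def PsigN (A : Finset ℤ) (k m : ℕ) : Finset ℤ → Prop :=
  fun T => T ∩ Finset.Icc (0:ℤ) k = A ∧ Finset.Icc ((k:ℤ)+1) (m:ℤ) ⊆ T + T

noncomputable def sCount (A : Finset ℤ) (k m : ℕ) : ℕ :=
  ((Finset.Icc (0:ℤ) m).powerset.filter (PsigN A k m)).card

lemma card_mirror_filter (n : ℕ) (w : Finset ℤ) (P : Finset ℤ → Prop) :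
    (w.powerset.filter (fun T => P (mirror n T))).card = ((mirror n w).powerset.filter P).card := by
  apply Finset.card_nbij' (mirror n) (mirror n)
  · intro T hT
    have := Finset.mem_filter.1 hT
    exact Finset.mem_filter.2 ⟨Finset.mem_powerset.2 (Finset.image_subset_image (Finset.mem_powerset.1 this.1)), this.2⟩
  · intro T hT
    have := Finset.mem_filter.1 hT
    refine Finset.mem_filter.2 ⟨Finset.mem_powerset.2 ?_, ?_⟩
    · have h2 := Finset.image_subset_image (f := fun s => (n:ℤ) - s) (Finset.mem_powerset.1 this.1)
      rw [show Finset.image (fun s => (n:ℤ) - s) (mirror n w) = w from mirror_mirror] at h2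
      exact h2
    · rw [mirror_mirror]
      exact this.2
  · intro T _; exact mirror_mirror
  · intro T _; exact mirror_mirror

section Main
variable (A B : Finset ℤ) (k m n : ℕ)

lemma rho_pred_iff (hk : k ≤ m) (hmn : 2*m+1 ≤ n) {S : Finset ℤ} (hS : S ⊆ Finset.Icc (0:ℤ) n) :
    (S ∩ Finset.Icc (0:ℤ) k = A ∧ mirror n S ∩ Finset.Icc (0:ℤ) k = B ∧
      Finset.Icc ((k:ℤ)+1) (2*(n:ℤ)-(k:ℤ)-1) ⊆ S + S)
    ↔ ((PsigN A k m (S ∩ Finset.Icc (0:ℤ) (m:ℤ)) ∧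
        PsigN B k m (mirror n (S ∩ Finset.Icc ((n:ℤ)-(m:ℤ)) (n:ℤ)))) ∧
        Finset.Icc ((m:ℤ)+1) (2*(n:ℤ)-(m:ℤ)-1) ⊆ S + S) := by
  have h0 : ∀ x ∈ S, (0:ℤ) ≤ x := fun x hx => (Finset.mem_Icc.1 (hS hx)).1
  have hM : mirror n S ⊆ Finset.Icc (0:ℤ) n := mirror_subset_Icc hS
  have hM0 : ∀ x ∈ mirror n S, (0:ℤ) ≤ x := fun x hx => (Finset.mem_Icc.1 (hM hx)).1
  have hkm : (k:ℤ) ≤ (m:ℤ) := by exact_mod_cast hk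
  have e1 : (S ∩ Finset.Icc (0:ℤ) (m:ℤ)) ∩ Finset.Icc (0:ℤ) k = S ∩ Finset.Icc (0:ℤ) k :=
    inter_Icc_inter hkm
  have e2 := range_restrict (S := S) h0 (mm := (m:ℤ)) (a := (k:ℤ)+1) (b := (m:ℤ)) le_rfl
  have e3 : mirror n (S ∩ Finset.Icc ((n:ℤ)-(m:ℤ)) (n:ℤ)) = mirror n S ∩ Finset.Icc (0:ℤ) (m:ℤ) := by
    rw [mirror_inter, mirror_Icc]
    congr 1 <;> ring
  have e4 : (mirror n S ∩ Finset.Icc (0:ℤ) (m:ℤ)) ∩ Finset.Icc (0:ℤ) k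
      = mirror n S ∩ Finset.Icc (0:ℤ) k := inter_Icc_inter hkm
  have e5 := range_restrict (S := mirror n S) hM0 (mm := (m:ℤ)) (a := (k:ℤ)+1) (b := (m:ℤ)) le_rfl
  have e6 : (Finset.Icc ((k:ℤ)+1) (m:ℤ) ⊆ mirror n S + mirror n S)
      ↔ Finset.Icc (2*(n:ℤ)-(m:ℤ)) (2*(n:ℤ)-(k:ℤ)-1) ⊆ S + S := by
    rw [mirror_range_subset]
    have : 2*(n:ℤ) - ((k:ℤ)+1) = 2*(n:ℤ)-(k:ℤ)-1 := by ring
    rw [this]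
  have esplit : (Finset.Icc ((k:ℤ)+1) (2*(n:ℤ)-(k:ℤ)-1) ⊆ S + S)
      ↔ (Finset.Icc ((k:ℤ)+1) (m:ℤ) ⊆ S + S ∧
         Finset.Icc ((m:ℤ)+1) (2*(n:ℤ)-(m:ℤ)-1) ⊆ S + S ∧
         Finset.Icc (2*(n:ℤ)-(m:ℤ)) (2*(n:ℤ)-(k:ℤ)-1) ⊆ S + S) := by
    constructor
    · intro h
      refine ⟨?_, ?_, ?_⟩ <;> intro s hs <;> apply h <;>
        (rw [Finset.mem_Icc] at hs ⊢; omega)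
    · rintro ⟨h1, h2, h3⟩ s hs
      rw [Finset.mem_Icc] at hs
      rcases le_or_gt s (m:ℤ) with h | h
      · exact h1 (Finset.mem_Icc.2 (by omega))
      · rcases le_or_gt s (2*(n:ℤ)-(m:ℤ)-1) with h' | h'
        · exact h2 (Finset.mem_Icc.2 (by omega))
        · exact h3 (Finset.mem_Icc.2 (by omega))
  unfold PsigN
  rw [e1, e3, e4, e2, e5, e6, esplit]
  tauto

lemma count_LU (hk : k ≤ m) (hmn : 2*m+1 ≤ n) :
    ((Finset.Icc (0:ℤ) n).powerset.filter
      (fun S => PsigN A k m (S ∩ Finset.Icc (0:ℤ) (m:ℤ)) ∧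
                PsigN B k m (mirror n (S ∩ Finset.Icc ((n:ℤ)-(m:ℤ)) (n:ℤ))))).card
      = sCount A k m * (2 ^ (n - (2*m+1)) * sCount B k m) := by
  set u := Finset.Icc (0:ℤ) (m:ℤ) with hu
  set vmid := Finset.Icc ((m:ℤ)+1) ((n:ℤ)-(m:ℤ)-1) with hvmid
  set w := Finset.Icc ((n:ℤ)-(m:ℤ)) (n:ℤ) with hw
  set v := Finset.Icc ((m:ℤ)+1) (n:ℤ) with hv
  have hguv : Finset.Icc (0:ℤ) n = u ∪ v := by
    ext x; simp only [hu, hv, Finset.mem_union, Finset.mem_Icc]; omega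
  have hvd : v = vmid ∪ w := by
    ext x; simp only [hv, hvmid, hw, Finset.mem_union, Finset.mem_Icc]; omega
  have hduv : Disjoint u v := by
    rw [Finset.disjoint_left]
    intro x hx hx'
    simp only [hu, hv, Finset.mem_Icc] at hx hx'
    omega
  have hdmw : Disjoint vmid w := by
    rw [Finset.disjoint_left]
    intro x hx hx'
    simp only [hvmid, hw, Finset.mem_Icc] at hx hx'
    omega
  have hwv : v ∩ w = w := by
    apply Finset.inter_eq_right.2
    intro x hx
    simp only [hw, Finset.mem_Icc] at hx
    simp only [hv, Finset.mem_Icc]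
    omega
  have step1 : ((Finset.Icc (0:ℤ) n).powerset.filter
      (fun S => PsigN A k m (S ∩ u) ∧ PsigN B k m (mirror n (S ∩ w)))).card
      = (u.powerset.filter (PsigN A k m)).card *
        (v.powerset.filter (fun T => PsigN B k m (mirror n (T ∩ w)))).card := by
    rw [hguv]
    have he : ∀ S ∈ (u ∪ v).powerset,
        (PsigN A k m (S ∩ u) ∧ PsigN B k m (mirror n (S ∩ w)))
        ↔ (PsigN A k m (S ∩ u) ∧ PsigN B k m (mirror n ((S ∩ v) ∩ w))) := by
      intro S _
      rw [Finset.inter_assoc, hwv]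
    refine (card_filter_iff he).trans ?_
    convert card_split u v hduv (PsigN A k m) (fun T => PsigN B k m (mirror n (T ∩ w))) using 2
  have step2 : (v.powerset.filter (fun T => PsigN B k m (mirror n (T ∩ w)))).card
      = 2 ^ (n - (2*m+1)) * (w.powerset.filter (fun T => PsigN B k m (mirror n T))).card := by
    rw [hvd]
    have h2 : vmid.card = n - (2*m+1) := by
      rw [hvmid, Int.card_Icc]
      omega
    rw [← h2]
    convert card_split_right vmid w hdmw (fun T' => PsigN B k m (mirror n T')) using 2
  have step3 : (w.powerset.filter (fun T => PsigN B k m (mirror n T))).card = sCount B k m := by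
    rw [card_mirror_filter]
    have : mirror n w = Finset.Icc (0:ℤ) (m:ℤ) := by
      rw [hw, mirror_Icc]
      congr 1 <;> ring
    rw [this]
    rfl
  rw [step1, step2, step3]
  rfl
end Main


noncomputable def rCount (A B : Finset ℤ) (k n : ℕ) : ℕ :=
  ((Finset.Icc (0:ℤ) n).powerset.filter
      (fun S => S ∩ Finset.Icc (0:ℤ) k = A ∧ mirror n S ∩ Finset.Icc (0:ℤ) k = B ∧
        Finset.Icc ((k:ℤ) + 1) (2 * n - k - 1) ⊆ S + S)).card

lemma sigmaN_eq (A : Finset ℤ) (k n : ℕ) : sigmaN A k n = (sCount A k n : ℝ) / 2 ^ n := by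
  unfold sigmaN sCount
  congr 2
  exact card_filter_iff (fun x _ => Iff.rfl)

lemma rhoABn_eq (A B : Finset ℤ) (k n : ℕ) : rhoABn A B k n = 2 * (rCount A B k n : ℝ) / 2 ^ n := rfl

section Main2
variable (A B : Finset ℤ) (k m n : ℕ)

lemma count_bounds (hk : k ≤ m) (hmn : 2*m+1 ≤ n) :
    rCount A B k n ≤ sCount A k m * (2 ^ (n - (2*m+1)) * sCount B k m) ∧
    sCount A k m * (2 ^ (n - (2*m+1)) * sCount B k m)
      ≤ rCount A B k n + 2*n * (3 ^ (m/2) * 2 ^ (n + 1 - 2*(m/2))) := by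
  classical
  set pow := (Finset.Icc (0:ℤ) n).powerset with hpow
  set LU := pow.filter (fun S => PsigN A k m (S ∩ Finset.Icc (0:ℤ) (m:ℤ)) ∧
      PsigN B k m (mirror n (S ∩ Finset.Icc ((n:ℤ)-(m:ℤ)) (n:ℤ)))) with hLU
  set rho := pow.filter
      (fun S => S ∩ Finset.Icc (0:ℤ) k = A ∧ mirror n S ∩ Finset.Icc (0:ℤ) k = B ∧
        Finset.Icc ((k:ℤ) + 1) (2 * n - k - 1) ⊆ S + S) with hrho
  have hrc : rCount A B k n = rho.card := by
    unfold rCount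
    exact card_filter_iff (fun x _ => Iff.rfl)
  have hLUc : LU.card = sCount A k m * (2 ^ (n - (2*m+1)) * sCount B k m) := by
    rw [hLU]
    exact (card_filter_iff (fun x _ => Iff.rfl)).trans (count_LU A B k m n hk hmn)
  have hiff : ∀ S ∈ pow,
      (S ∩ Finset.Icc (0:ℤ) k = A ∧ mirror n S ∩ Finset.Icc (0:ℤ) k = B ∧
        Finset.Icc ((k:ℤ) + 1) (2 * n - k - 1) ⊆ S + S)
      ↔ ((PsigN A k m (S ∩ Finset.Icc (0:ℤ) (m:ℤ)) ∧
          PsigN B k m (mirror n (S ∩ Finset.Icc ((n:ℤ)-(m:ℤ)) (n:ℤ)))) ∧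
          Finset.Icc ((m:ℤ)+1) (2*(n:ℤ)-(m:ℤ)-1) ⊆ S + S) := by
    intro S hS
    exact rho_pred_iff A B k m n hk hmn (Finset.mem_powerset.1 hS)
  have hsub : rho ⊆ LU := by
    intro S hS
    rw [hrho, Finset.mem_filter] at hS
    rw [hLU, Finset.mem_filter]
    exact ⟨hS.1, ((hiff S hS.1).1 hS.2).1⟩
  constructor
  · rw [hrc, ← hLUc]
    exact Finset.card_le_card hsub
  · rw [hrc, ← hLUc]
    have h1 : LU.card ≤ (LU \ rho).card + rho.card := Finset.card_le_card_sdiff_add_card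
    have h2 : (LU \ rho) ⊆ (Finset.Icc ((m:ℤ)+1) (2*(n:ℤ)-(m:ℤ)-1)).biUnion
        (fun s => pow.filter (fun S => s ∉ S + S)) := by
      intro S hS
      rw [Finset.mem_sdiff, hLU, Finset.mem_filter, hrho] at hS
      obtain ⟨⟨hSpow, hLUpred⟩, hnrho⟩ := hS
      have hnot : ¬ (Finset.Icc ((m:ℤ)+1) (2*(n:ℤ)-(m:ℤ)-1) ⊆ S + S) := by
        intro hmid
        exact hnrho (Finset.mem_filter.2 ⟨hSpow, (hiff S hSpow).2 ⟨hLUpred, hmid⟩⟩)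
      rcases Finset.not_subset.1 hnot with ⟨s, hs, hsn⟩
      exact Finset.mem_biUnion.2 ⟨s, hs, Finset.mem_filter.2 ⟨hSpow, hsn⟩⟩
    have h3 : ((Finset.Icc ((m:ℤ)+1) (2*(n:ℤ)-(m:ℤ)-1)).biUnion
        (fun s => pow.filter (fun S => s ∉ S + S))).card
        ≤ 2*n * (3 ^ (m/2) * 2 ^ (n + 1 - 2*(m/2))) := by
      refine (Finset.card_biUnion_le).trans ?_
      have hb : ∀ s ∈ Finset.Icc ((m:ℤ)+1) (2*(n:ℤ)-(m:ℤ)-1),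
          (pow.filter (fun S => s ∉ S + S)).card ≤ 3 ^ (m/2) * 2 ^ (n + 1 - 2*(m/2)) := by
        intro s hs
        rw [Finset.mem_Icc] at hs
        have := card_bad n m s (by omega) (by omega) (by omega)
        refine le_trans (le_of_eq ?_) this
        exact card_filter_iff (fun x _ => Iff.rfl)
      refine (Finset.sum_le_card_nsmul _ _ _ hb).trans ?_
      rw [smul_eq_mul]
      have hcard : (Finset.Icc ((m:ℤ)+1) (2*(n:ℤ)-(m:ℤ)-1)).card ≤ 2*n := by
        rw [Int.card_Icc]
        omega
      exact Nat.mul_le_mul_right _ hcard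
    calc LU.card ≤ (LU \ rho).card + rho.card := h1
      _ ≤ 2*n * (3 ^ (m/2) * 2 ^ (n + 1 - 2*(m/2))) + rho.card :=
          Nat.add_le_add_right ((Finset.card_le_card h2).trans h3) _
      _ = rho.card + 2*n * (3 ^ (m/2) * 2 ^ (n + 1 - 2*(m/2))) := by omega

end Main2

section Main3
variable (A B : Finset ℤ) (k m n : ℕ)

lemma real_bounds (hk : k ≤ m) (hmn : 2*m+1 ≤ n) :
    rhoABn A B k n ≤ sigmaN A k m * sigmaN B k m ∧
    sigmaN A k m * sigmaN B k m ≤ rhoABn A B k n + 8*(n:ℝ)*(3/4:ℝ)^(m/2) := by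
  have h2n : ((2:ℝ) ^ n) ≠ 0 := by positivity
  have h2n' : (0:ℝ) < 2 ^ n := by positivity
  have e0 : sigmaN A k m * sigmaN B k m
      = 2 * ((sCount A k m * (2 ^ (n - (2*m+1)) * sCount B k m) : ℕ) : ℝ) / 2 ^ n := by
    have hp2 : (2:ℝ)^n = 2^(n-(2*m+1)) * (2^m * 2^m * 2) := by
      calc (2:ℝ)^n = 2^((n-(2*m+1)) + (m+m+1)) := by congr 1; omega
        _ = 2^(n-(2*m+1)) * (2^m*2^m*2) := by rw [pow_add, pow_add, pow_add, pow_one]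
    rw [sigmaN_eq, sigmaN_eq]
    push_cast
    rw [hp2]
    have hm0 : ((2:ℝ) ^ m) ≠ 0 := by positivity
    have hc0 : ((2:ℝ) ^ (n-(2*m+1))) ≠ 0 := by positivity
    field_simp
  have e1 : 2 * ((2*n * (3 ^ (m/2) * 2 ^ (n + 1 - 2*(m/2))) : ℕ) : ℝ) / 2 ^ n
      = 8*(n:ℝ)*(3/4:ℝ)^(m/2) := by
    have h2q : ((2:ℝ) ^ (2*(m/2))) ≠ 0 := by positivity
    have hp : (2:ℝ) ^ (n + 1 - 2*(m/2)) * 2 ^ (2*(m/2)) = 2 ^ (n+1) := by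
      rw [← pow_add]
      congr 1
      omega
    have hsplit : (2:ℝ)^(n+1-2*(m/2)) = 2^(n+1) / 2^(2*(m/2)) := by
      rw [eq_div_iff h2q, hp]
    have h4 : (4:ℝ)^(m/2) = 2^(2*(m/2)) := by
      rw [pow_mul]
      norm_num
    have h34 : (3/4:ℝ)^(m/2) = 3^(m/2) / 2^(2*(m/2)) := by
      rw [div_pow, h4]
    push_cast
    rw [hsplit, h34, pow_succ]
    field_simp
    ring
  obtain ⟨hc1, hc2⟩ := count_bounds A B k m n hk hmn
  constructor
  · rw [rhoABn_eq, e0]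
    gcongr 2 * ?_ / 2 ^ n
    exact_mod_cast hc1
  · rw [rhoABn_eq, e0, ← e1]
    calc 2 * ((sCount A k m * (2 ^ (n - (2*m+1)) * sCount B k m) : ℕ) : ℝ) / 2 ^ n
        ≤ 2 * (((rCount A B k n : ℕ) : ℝ) + ((2*n * (3 ^ (m/2) * 2 ^ (n + 1 - 2*(m/2))) : ℕ) : ℝ)) / 2^n := by
          gcongr
          exact_mod_cast hc2
      _ = 2 * ((rCount A B k n : ℕ) : ℝ) / 2 ^ n
          + 2 * ((2*n * (3 ^ (m/2) * 2 ^ (n + 1 - 2*(m/2))) : ℕ) : ℝ) / 2 ^ n := by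
          ring

end Main3

lemma sigmaN_nonneg (A : Finset ℤ) (k n : ℕ) : 0 ≤ sigmaN A k n := by
  rw [sigmaN_eq]
  positivity

lemma sCount_succ_le (A : Finset ℤ) (k n : ℕ) (hk : k ≤ n) :
    sCount A k (n+1) ≤ 2 * sCount A k n := by
  unfold sCount
  apply Finset.card_le_mul_card_image_of_maps_to (f := fun S => S ∩ Finset.Icc (0:ℤ) n)
  · intro S hS
    rw [Finset.mem_filter, Finset.mem_powerset] at hS
    obtain ⟨hsub, hA, hsums⟩ := hS
    have h0 : ∀ x ∈ S, (0:ℤ) ≤ x := fun x hx => (Finset.mem_Icc.1 (hsub hx)).1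
    rw [Finset.mem_filter, Finset.mem_powerset]
    refine ⟨Finset.inter_subset_right, ?_, ?_⟩
    · rw [inter_Icc_inter (by exact_mod_cast hk)]
      exact hA
    · rw [range_restrict h0 le_rfl]
      intro s hs
      apply hsums
      rw [Finset.mem_Icc] at hs ⊢
      push_cast
      omega
  · intro T hT
    have hsubT : Finset.filter (fun S => S ∩ Finset.Icc (0:ℤ) n = T)
        ((Finset.Icc (0:ℤ) (n+1)).powerset.filter (PsigN A k (n+1)))
        ⊆ {T, insert ((n:ℤ)+1) T} := by
      intro S hS
      rw [Finset.mem_filter, Finset.mem_filter, Finset.mem_powerset] at hS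
      obtain ⟨⟨hsub, _⟩, hST⟩ := hS
      by_cases hmem : ((n:ℤ)+1) ∈ S
      · apply Finset.mem_insert.2
        right
        rw [Finset.mem_singleton]
        rw [← hST]
        ext x
        simp only [Finset.mem_insert, Finset.mem_inter, Finset.mem_Icc]
        constructor
        · intro hx
          have := hsub hx
          rw [Finset.mem_Icc] at this
          rcases eq_or_lt_of_le this.2 with h | h
          · left; push_cast at h; omega
          · right; refine ⟨hx, this.1, by push_cast at h; omega⟩
        · rintro (rfl | ⟨hx, _⟩)
          · exact hmem
          · exact hx
      · apply Finset.mem_insert.2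
        left
        rw [← hST]
        ext x
        simp only [Finset.mem_inter, Finset.mem_Icc]
        constructor
        · intro hx
          have := hsub hx
          rw [Finset.mem_Icc] at this
          refine ⟨hx, this.1, ?_⟩
          rcases eq_or_lt_of_le this.2 with h | h
          · exact absurd (h ▸ hx) hmem
          · push_cast at h; omega
        · rintro ⟨hx, _⟩; exact hx
    calc (Finset.filter (fun S => S ∩ Finset.Icc (0:ℤ) n = T)
        ((Finset.Icc (0:ℤ) (n+1)).powerset.filter (PsigN A k (n+1)))).card
        ≤ ({T, insert ((n:ℤ)+1) T} : Finset (Finset ℤ)).card := Finset.card_le_card hsubT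
      _ ≤ 2 := by
        refine (Finset.card_insert_le _ _).trans ?_
        simp

lemma sigmaN_succ_le (A : Finset ℤ) (k n : ℕ) (hk : k ≤ n) :
    sigmaN A k (n+1) ≤ sigmaN A k n := by
  rw [sigmaN_eq, sigmaN_eq]
  have h := sCount_succ_le A k n hk
  rw [pow_succ]
  rw [div_le_div_iff₀ (by positivity) (by positivity)]
  have : ((sCount A k (n+1) : ℝ)) ≤ 2 * (sCount A k n : ℝ) := by exact_mod_cast h
  nlinarith [this, pow_pos (show (0:ℝ) < 2 by norm_num) n]

lemma sigma_tendsto (A : Finset ℤ) (k : ℕ) : ∃ sA : ℝ, Tendsto (sigmaN A k) atTop (nhds sA) := by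
  have hanti : Antitone (fun j => sigmaN A k (j + k)) := by
    apply antitone_nat_of_succ_le
    intro j
    have := sigmaN_succ_le A k (j + k) (by omega)
    simpa [show j + 1 + k = (j + k) + 1 by omega] using this
  have hbdd : BddBelow (Set.range fun j => sigmaN A k (j + k)) := by
    refine ⟨0, ?_⟩
    rintro x ⟨j, rfl⟩
    exact sigmaN_nonneg A k (j + k)
  exact ⟨_, (tendsto_add_atTop_iff_nat k).1 (tendsto_atTop_ciInf hanti hbdd)⟩



/-- for an MSTD fringe pair `(A,B;k)`, `ρ_n(A,B;k)` converges and its limit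
is `σ(A;k)·σ(B;k)`. -/
theorem rho_pair_limit (A B : Finset ℤ) (k : ℕ) (h : IsFringePair A B k) :
    ∃ sA sB : ℝ,
      Filter.Tendsto (sigmaN A k) Filter.atTop (nhds sA) ∧
      Filter.Tendsto (sigmaN B k) Filter.atTop (nhds sB) ∧
      Filter.Tendsto (rhoABn A B k) Filter.atTop (nhds (sA * sB)) := by
  obtain ⟨sA, hA⟩ := sigma_tendsto A k
  obtain ⟨sB, hB⟩ := sigma_tendsto B k
  refine ⟨sA, sB, hA, hB, ?_⟩
  set mf : ℕ → ℕ := fun n => (n - 1) / 2 with hmf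
  set qf : ℕ → ℕ := fun n => (n - 1) / 2 / 2 with hqf
  have hmtop : Tendsto mf atTop atTop := by
    apply tendsto_atTop_atTop.2
    intro b
    exact ⟨2 * b + 1, fun a ha => by simp only [hmf]; omega⟩
  have hqtop : Tendsto qf atTop atTop := by
    apply tendsto_atTop_atTop.2
    intro b
    exact ⟨4 * b + 1, fun a ha => by simp only [hqf]; omega⟩
  set p : ℕ → ℝ := fun n => sigmaN A k (mf n) * sigmaN B k (mf n) with hp'
  have hp : Tendsto p atTop (nhds (sA * sB)) := (hA.comp hmtop).mul (hB.comp hmtop)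
  set err : ℕ → ℝ := fun n => 8 * (n:ℝ) * (3/4:ℝ) ^ (qf n) with herr'
  have hE : Tendsto (fun j : ℕ => 8 * (4 * (j:ℝ) + 4) * (3/4:ℝ) ^ j) atTop (nhds 0) := by
    have h1 := tendsto_pow_const_mul_const_pow_of_lt_one 1
      (show (0:ℝ) ≤ 3/4 by norm_num) (show (3/4:ℝ) < 1 by norm_num)
    have h2 := tendsto_pow_const_mul_const_pow_of_lt_one 0
      (show (0:ℝ) ≤ 3/4 by norm_num) (show (3/4:ℝ) < 1 by norm_num)
    have := (h1.const_mul (32:ℝ)).add (h2.const_mul (32:ℝ))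
    simp only [mul_zero, add_zero] at this
    refine this.congr (fun j => ?_)
    simp only [pow_one, pow_zero]
    ring
  have herr : Tendsto err atTop (nhds 0) := by
    apply squeeze_zero (fun n => by positivity)
      (g := fun n => (fun j : ℕ => 8 * (4 * (j:ℝ) + 4) * (3/4:ℝ) ^ j) (qf n))
    · intro n
      simp only [herr']
      have hn4 : (n:ℝ) ≤ 4 * (qf n : ℝ) + 4 := by
        have : n ≤ 4 * qf n + 4 := by simp only [hqf]; omega
        exact_mod_cast this
      have hpow : (0:ℝ) ≤ (3/4:ℝ) ^ (qf n) := by positivity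
      nlinarith
    · exact hE.comp hqtop
  have hbound : ∀ᶠ n in atTop, |rhoABn A B k n - p n| ≤ err n := by
    rw [eventually_atTop]
    refine ⟨2 * k + 2, fun n hn => ?_⟩
    have hk : k ≤ mf n := by simp only [hmf]; omega
    have hmn : 2 * (mf n) + 1 ≤ n := by simp only [hmf]; omega
    obtain ⟨hub, hlb⟩ := real_bounds A B k (mf n) n hk hmn
    have herrnn : (0:ℝ) ≤ err n := by positivity
    rw [abs_le]
    constructor
    · simp only [herr', hp'] at *
      have : mf n / 2 = qf n := rfl
      rw [this] at hlb
      linarith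
    · simp only [hp'] at *
      linarith
  have hdiff : Tendsto (fun n => rhoABn A B k n - p n) atTop (nhds 0) := by
    apply squeeze_zero_norm' (by simpa [Real.norm_eq_abs] using hbound) herr
  have := hdiff.add hp
  simp only [zero_add] at this
  refine this.congr (fun n => by ring)
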